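/- Let $\Pi$ be a Lévy measure, $m(x) = \gamma - \int_{x \le |y|<1} y\,\Pi(dy)$, and $\overline\Pi(x) = \Pi(\mathbb{R}\setminus[-x,x])$. Assume $x\,\overline\Pi(x)/m(x) \to 0$ as $x \downarrow 0$ and $m(x) > 0$ for all small $x$. Then $m$ is slowly varying at $0$: $m(\lambda x)/m(x) \to 1$ as $x \downarrow 0$ for all $\lambda > 0$. -/

import Mathlib

open MeasureTheory Filter Topology

private lemma tmsv_tail_meas (t : ℝ) : MeasurableSet {y : ℝ | t ≤ |y|} :=
  measurableSet_le measurable_const measurable_abs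

private lemma tmsv_shell_meas (a b : ℝ) : MeasurableSet {y : ℝ | a ≤ |y| ∧ |y| < b} :=
  (measurableSet_le measurable_const measurable_abs).inter
    (measurableSet_lt measurable_abs measurable_const)

private lemma tmsv_tail_fin (Pi0 : Measure ℝ)
    (hlevy : ∫⁻ x, ENNReal.ofReal (min (x ^ 2) 1) ∂Pi0 ≠ ⊤)
    {t : ℝ} (ht : 0 < t) : Pi0 {y : ℝ | t ≤ |y|} ≠ ⊤ := by
  intro htop
  have hc : (0:ℝ) < min (t ^ 2) 1 := lt_min (by positivity) one_pos
  have hle : ENNReal.ofReal (min (t ^ 2) 1) * Pi0 {y : ℝ | t ≤ |y|}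
      ≤ ∫⁻ x, ENNReal.ofReal (min (x ^ 2) 1) ∂Pi0 := by
    rw [← setLIntegral_const {y : ℝ | t ≤ |y|} (ENNReal.ofReal (min (t ^ 2) 1))]
    calc ∫⁻ x in {y : ℝ | t ≤ |y|}, ENNReal.ofReal (min (t ^ 2) 1) ∂Pi0
        ≤ ∫⁻ x in {y : ℝ | t ≤ |y|}, ENNReal.ofReal (min (x ^ 2) 1) ∂Pi0 := by
          refine setLIntegral_mono
            (((measurable_id.pow_const 2).min measurable_const).ennreal_ofReal) ?_
          intro x hx
          refine ENNReal.ofReal_le_ofReal (min_le_min ?_ le_rfl)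
          calc t ^ 2 ≤ |x| ^ 2 := by
                exact pow_le_pow_left₀ ht.le hx 2
            _ = x ^ 2 := sq_abs x
      _ ≤ ∫⁻ x, ENNReal.ofReal (min (x ^ 2) 1) ∂Pi0 :=
          setLIntegral_le_lintegral _ _
  rw [htop, ENNReal.mul_top (ENNReal.ofReal_pos.mpr hc).ne'] at hle
  exact hlevy (top_le_iff.mp hle)

private lemma tmsv_int (Pi0 : Measure ℝ) {s : Set ℝ} {t : ℝ}
    (hfin : Pi0 {y : ℝ | t ≤ |y|} ≠ ⊤) (hs : MeasurableSet s)
    (hsub : s ⊆ {y : ℝ | t ≤ |y| ∧ |y| ≤ 1}) :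
    IntegrableOn (fun y : ℝ => y) s Pi0 := by
  have hfs : Pi0 s ≠ ⊤ :=
    ((measure_mono fun y hy => (hsub hy).1).trans_lt (lt_top_iff_ne_top.mpr hfin)).ne
  refine Measure.integrableOn_of_bounded hfs measurable_id.aestronglyMeasurable
    (M := 1) ?_
  filter_upwards [ae_restrict_mem hs] with y hy
  simpa [Real.norm_eq_abs] using (hsub hy).2

private lemma tmsv_diff (Pi0 : Measure ℝ) (γ : ℝ) (m : ℝ → ℝ)
    (hlevy : ∫⁻ x, ENNReal.ofReal (min (x ^ 2) 1) ∂Pi0 ≠ ⊤)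
    (hm : ∀ x, m x = γ - ∫ y in {y : ℝ | x ≤ |y| ∧ |y| < 1}, y ∂Pi0)
    {x u : ℝ} (hx : 0 < x) (hxu : x ≤ u) (hu : u ≤ 1) :
    m x = m u - ∫ y in {y : ℝ | x ≤ |y| ∧ |y| < u}, y ∂Pi0 := by
  have hfin := tmsv_tail_fin Pi0 hlevy hx
  have hsplit : {y : ℝ | x ≤ |y| ∧ |y| < 1}
      = {y : ℝ | x ≤ |y| ∧ |y| < u} ∪ {y : ℝ | u ≤ |y| ∧ |y| < 1} := by
    ext y
    simp only [Set.mem_setOf_eq, Set.mem_union]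
    constructor
    · rintro ⟨h1, h2⟩
      rcases lt_or_ge |y| u with h | h
      · exact Or.inl ⟨h1, h⟩
      · exact Or.inr ⟨h, h2⟩
    · rintro (⟨h1, h2⟩ | ⟨h1, h2⟩)
      · exact ⟨h1, h2.trans_le hu⟩
      · exact ⟨hxu.trans h1, h2⟩
  have hdisj : Disjoint {y : ℝ | x ≤ |y| ∧ |y| < u} {y : ℝ | u ≤ |y| ∧ |y| < 1} := by
    rw [Set.disjoint_left]
    rintro y ⟨_, h2⟩ ⟨h3, _⟩
    exact absurd h3 (not_le.mpr h2)
  have hi1 : IntegrableOn (fun y : ℝ => y) {y : ℝ | x ≤ |y| ∧ |y| < u} Pi0 :=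
    tmsv_int Pi0 hfin (tmsv_shell_meas _ _)
      (fun y hy => ⟨hy.1, le_of_lt (lt_of_lt_of_le hy.2 hu)⟩)
  have hi2 : IntegrableOn (fun y : ℝ => y) {y : ℝ | u ≤ |y| ∧ |y| < 1} Pi0 :=
    tmsv_int Pi0 hfin (tmsv_shell_meas _ _)
      (fun y hy => ⟨hxu.trans hy.1, hy.2.le⟩)
  rw [hm x, hm u, hsplit, setIntegral_union hdisj (tmsv_shell_meas _ _) hi1 hi2]
  ring

private lemma tmsv_norm (Pi0 : Measure ℝ) {a b : ℝ}
    (hfin : Pi0 {y : ℝ | a ≤ |y| ∧ |y| < b} < ⊤) :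
    |∫ y in {y : ℝ | a ≤ |y| ∧ |y| < b}, y ∂Pi0|
      ≤ b * (Pi0 {y : ℝ | a ≤ |y| ∧ |y| < b}).toReal := by
  have h := norm_setIntegral_le_of_norm_le_const_ae' (C := b) (f := fun y : ℝ => y)
    hfin ?_
  · simpa [Real.norm_eq_abs, measureReal_def] using h
  · filter_upwards with y hy
    simpa [Real.norm_eq_abs] using hy.2.le

/-- Key estimate: `x · Π{|y| ≥ x} ≤ ε · m x` eventually. -/
private lemma tmsv_key (Pi0 : Measure ℝ) (γ : ℝ)
    (hlevy : ∫⁻ x, ENNReal.ofReal (min (x ^ 2) 1) ∂Pi0 ≠ ⊤)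
    (m : ℝ → ℝ)
    (hm : ∀ x, m x = γ - ∫ y in {y : ℝ | x ≤ |y| ∧ |y| < 1}, y ∂Pi0)
    (hpos : ∀ᶠ x in 𝓝[>] (0:ℝ), 0 < m x)
    (hneg : Tendsto (fun x => x * (Pi0 {y | x < |y|}).toReal / m x)
      (𝓝[>] (0:ℝ)) (𝓝 0))
    {ε : ℝ} (hε : 0 < ε) :
    ∀ᶠ x in 𝓝[>] (0:ℝ),
      0 < m x ∧ x * (Pi0 {y : ℝ | x ≤ |y|}).toReal ≤ ε * m x := by
  have h1 : ∀ᶠ s in 𝓝[>] (0:ℝ),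
      s * (Pi0 {y | s < |y|}).toReal / m s < ε / 2 :=
    hneg.eventually_lt_const (by positivity)
  obtain ⟨δ₀, hδ₀, hδ⟩ := mem_nhdsGT_iff_exists_Ioo_subset.mp (h1.and hpos)
  set δ := min δ₀ 1 with hδdef
  have hδpos : (0:ℝ) < δ := lt_min hδ₀ one_pos
  filter_upwards [Ioo_mem_nhdsGT_of_mem (Set.mem_Ico.mpr ⟨le_rfl, hδpos⟩)]
    with x hx
  obtain ⟨hx0, hxδ⟩ := hx
  have hx1 : x < 1 := hxδ.trans_le (min_le_right _ _)
  have hxδ₀ : x < δ₀ := hxδ.trans_le (min_le_left _ _)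
  have hP : ∀ s : ℝ, s ∈ Set.Ioo (0:ℝ) δ₀ →
      s * (Pi0 {y | s < |y|}).toReal < (ε / 2) * m s ∧ 0 < m s := by
    intro s hs
    have := hδ hs
    refine ⟨?_, this.2⟩
    have := this.1
    rwa [div_lt_iff₀ (hδ hs).2] at this
  have hmx : 0 < m x := (hP x ⟨hx0, hxδ₀⟩).2
  refine ⟨hmx, ?_⟩
  -- approximating sequence s n ↑ x
  set s : ℕ → ℝ := fun n => x - x / (n + 2) with hsdef
  have hs_pos : ∀ n, 0 < s n := by
    intro n
    have h2 : x / (n + 2) < x := by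
      rw [div_lt_iff₀ (by positivity)]
      nlinarith [Nat.cast_nonneg (α := ℝ) n]
    simpa [hsdef] using sub_pos.mpr h2
  have hs_lt : ∀ n, s n < x := by
    intro n
    have : 0 < x / (n + 2) := by positivity
    simpa [hsdef] using sub_lt_self x this
  have hs_mono : Monotone s := by
    intro a b hab
    have : x / (b + 2) ≤ x / (a + 2) := by
      apply div_le_div_of_nonneg_left hx0.le (by positivity)
      exact_mod_cast by exact_mod_cast add_le_add_left (Nat.cast_le.mpr hab) 2
    simpa [hsdef] using sub_le_sub_left this x
  have hs_tend : Tendsto s atTop (𝓝 x) := by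
    have hg : Tendsto (fun n : ℕ => (n : ℝ) + 2) atTop atTop :=
      tendsto_atTop_add_const_right _ 2 tendsto_natCast_atTop_atTop
    have h0 : Tendsto (fun n : ℕ => x / ((n : ℝ) + 2)) atTop (𝓝 0) :=
      Tendsto.div_atTop tendsto_const_nhds hg
    have hc : Tendsto (fun _ : ℕ => x) atTop (𝓝 x) := tendsto_const_nhds
    simpa using hc.sub h0
  -- the shells B n = {s n ≤ |y| < x} have measure tending to 0
  set B : ℕ → Set ℝ := fun n => {y : ℝ | s n ≤ |y| ∧ |y| < x} with hBdef
  have hB_meas : ∀ n, MeasurableSet (B n) := fun n => tmsv_shell_meas _ _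
  have hB_anti : Antitone B := by
    intro a b hab y hy
    exact ⟨(hs_mono hab).trans hy.1, hy.2⟩
  have hB_fin : ∀ n, Pi0 (B n) ≠ ⊤ := by
    intro n
    exact ((measure_mono fun y hy => hy.1).trans_lt
      (lt_top_iff_ne_top.mpr (tmsv_tail_fin Pi0 hlevy (hs_pos n)))).ne
  have hB_inter : (⋂ n, B n) = ∅ := by
    ext y
    simp only [Set.mem_iInter, Set.mem_empty_iff_false, iff_false]
    intro h
    obtain ⟨n, hn⟩ := (hs_tend.eventually (eventually_gt_nhds (h 0).2)).exists
    exact absurd ((h n).1) (not_le.mpr hn)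
  have hB_tend : Tendsto (fun n => (Pi0 (B n)).toReal) atTop (𝓝 0) := by
    have h := tendsto_measure_iInter_atTop
      (fun n => (hB_meas n).nullMeasurableSet) hB_anti ⟨0, hB_fin 0⟩
    rw [hB_inter] at h
    simp only [measure_empty] at h
    have := (ENNReal.tendsto_toReal (a := 0) (by simp)).comp h
    simpa [Function.comp_def] using this
  -- m (s n) ≤ m x + x * Pi0 (B n)
  have hms : ∀ n, m (s n) ≤ m x + x * (Pi0 (B n)).toReal := by
    intro n
    have hdiff := tmsv_diff Pi0 γ m hlevy hm (hs_pos n) (hs_lt n).le hx1.le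
    have hnorm := tmsv_norm Pi0 (a := s n) (b := x)
      (lt_top_iff_ne_top.mpr (hB_fin n))
    rw [hdiff]
    have := abs_le.mp hnorm
    simp only [hBdef] at *
    linarith [this.1]
  -- the main inequality for each n
  have hmain : ∀ n, x * (Pi0 {y : ℝ | x ≤ |y|}).toReal
      ≤ (x / s n) * ((ε / 2) * (m x + x * (Pi0 (B n)).toReal)) := by
    intro n
    have hsn := hs_pos n
    have hPn := hP (s n) ⟨hsn, (hs_lt n).trans hxδ₀⟩
    have hsub : {y : ℝ | x ≤ |y|} ⊆ {y : ℝ | s n < |y|} :=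
      fun y hy => (hs_lt n).trans_le hy
    have hfin2 : Pi0 {y : ℝ | s n < |y|} ≠ ⊤ :=
      ((measure_mono fun y (hy : s n < |y|) => hy.le).trans_lt
        (lt_top_iff_ne_top.mpr (tmsv_tail_fin Pi0 hlevy hsn))).ne
    have h2 : (Pi0 {y : ℝ | x ≤ |y|}).toReal ≤ (Pi0 {y | s n < |y|}).toReal :=
      ENNReal.toReal_mono hfin2 (measure_mono hsub)
    have h3 : s n * (Pi0 {y | s n < |y|}).toReal ≤ (ε / 2) * m (s n) := (hPn.1).le
    have h4 : m (s n) ≤ m x + x * (Pi0 (B n)).toReal := hms n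
    have h5 : (0:ℝ) ≤ (Pi0 {y | s n < |y|}).toReal := ENNReal.toReal_nonneg
    rw [div_mul_eq_mul_div, le_div_iff₀ hsn]
    have h6 := mul_le_mul_of_nonneg_left h2 (mul_nonneg hx0.le hsn.le)
    have h7 := mul_le_mul_of_nonneg_left h3 hx0.le
    have h8 := mul_le_mul_of_nonneg_left h4
      (mul_nonneg hx0.le (le_of_lt (half_pos hε)))
    calc x * (Pi0 {y : ℝ | x ≤ |y|}).toReal * s n
        = x * s n * (Pi0 {y : ℝ | x ≤ |y|}).toReal := by ring
      _ ≤ x * s n * (Pi0 {y | s n < |y|}).toReal := h6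
      _ = x * (s n * (Pi0 {y | s n < |y|}).toReal) := by ring
      _ ≤ x * (ε / 2 * m (s n)) := h7
      _ = x * (ε / 2) * m (s n) := by ring
      _ ≤ x * (ε / 2) * (m x + x * (Pi0 (B n)).toReal) := h8
      _ = x * (ε / 2 * (m x + x * (Pi0 (B n)).toReal)) := by ring
  -- pass to the limit
  have hlim : Tendsto (fun n => (x / s n) * ((ε / 2) * (m x + x * (Pi0 (B n)).toReal)))
      atTop (𝓝 ((ε / 2) * m x)) := by
    have h1 : Tendsto (fun n => x / s n) atTop (𝓝 1) := by
      have hc : Tendsto (fun _ : ℕ => x) atTop (𝓝 x) := tendsto_const_nhds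
      have := hc.div hs_tend hx0.ne'
      simpa [div_self hx0.ne', Pi.div_def] using this
    have h2 : Tendsto (fun n => (ε / 2) * (m x + x * (Pi0 (B n)).toReal)) atTop
        (𝓝 ((ε / 2) * m x)) := by
      have hc : Tendsto (fun _ : ℕ => m x) atTop (𝓝 (m x)) := tendsto_const_nhds
      have hc2 : Tendsto (fun _ : ℕ => x) atTop (𝓝 x) := tendsto_const_nhds
      have hc3 : Tendsto (fun _ : ℕ => ε / 2) atTop (𝓝 (ε / 2)) := tendsto_const_nhds
      have := hc3.mul (hc.add (hc2.mul hB_tend))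
      simpa using this
    have := h1.mul h2
    simpa using this
  have := ge_of_tendsto' hlim hmain
  nlinarith

/-- If the truncated mean `m x = γ - ∫_{x ≤ |y| < 1} y dΠ` is positive for small
`x` and `x Π̄(x)/m(x) → 0` as `x ↓ 0`, then `m` is slowly varying at `0`. -/
theorem truncated_mean_slowly_varying (Pi0 : Measure ℝ) (γ : ℝ)
    (hPi0 : Pi0 {0} = 0)
    (hlevy : ∫⁻ x, ENNReal.ofReal (min (x ^ 2) 1) ∂Pi0 ≠ ⊤)
    (m : ℝ → ℝ)
    (hm : ∀ x, m x = γ - ∫ y in {y : ℝ | x ≤ |y| ∧ |y| < 1}, y ∂Pi0)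
    (hpos : ∀ᶠ x in 𝓝[>] (0:ℝ), 0 < m x)
    (hneg : Tendsto (fun x => x * (Pi0 {y | x < |y|}).toReal / m x)
      (𝓝[>] (0:ℝ)) (𝓝 0)) :
    ∀ l > (0:ℝ), Tendsto (fun x => m (l * x) / m x) (𝓝[>] (0:ℝ)) (𝓝 1) := by
  -- First, the case l ≥ 1
  have H : ∀ l : ℝ, 1 ≤ l → Tendsto (fun x => m (l * x) / m x) (𝓝[>] (0:ℝ)) (𝓝 1) := by
    intro l hl
    have hl0 : (0:ℝ) < l := lt_of_lt_of_le one_pos hl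
    rw [Metric.tendsto_nhds]
    intro ε hε
    have hε' : (0:ℝ) < ε / (2 * l) := by positivity
    have hkey := tmsv_key Pi0 γ hlevy m hm hpos hneg hε'
    obtain ⟨δ₀, hδ₀, hδ⟩ := mem_nhdsGT_iff_exists_Ioo_subset.mp hkey
    set δ := min δ₀ (1 / l) with hδdef
    have hδpos : (0:ℝ) < δ := lt_min hδ₀ (by positivity)
    filter_upwards [Ioo_mem_nhdsGT_of_mem (Set.mem_Ico.mpr ⟨le_rfl, hδpos⟩)]
      with x hx
    obtain ⟨hx0, hxδ⟩ := hx
    have hxδ₀ : x < δ₀ := hxδ.trans_le (min_le_left _ _)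
    have hlx1 : l * x ≤ 1 := by
      have : x < 1 / l := hxδ.trans_le (min_le_right _ _)
      rw [lt_div_iff₀ hl0] at this
      nlinarith
    obtain ⟨hmx, hbound⟩ := hδ ⟨hx0, hxδ₀⟩
    have hxl : x ≤ l * x := le_mul_of_one_le_left hx0.le hl
    -- |m (l x) - m x| ≤ l * x * Pi0 {x ≤ |y|}
    have hdiff := tmsv_diff Pi0 γ m hlevy hm hx0 hxl hlx1
    have hBfin : Pi0 {y : ℝ | x ≤ |y| ∧ |y| < l * x} ≠ ⊤ :=
      ((measure_mono fun y hy => hy.1).trans_lt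
        (lt_top_iff_ne_top.mpr (tmsv_tail_fin Pi0 hlevy hx0))).ne
    have hnorm := tmsv_norm Pi0 (a := x) (b := l * x) (lt_top_iff_ne_top.mpr hBfin)
    have htail_fin := tmsv_tail_fin Pi0 hlevy hx0
    have hmono : (Pi0 {y : ℝ | x ≤ |y| ∧ |y| < l * x}).toReal
        ≤ (Pi0 {y : ℝ | x ≤ |y|}).toReal :=
      ENNReal.toReal_mono htail_fin (measure_mono fun y hy => hy.1)
    have hest : |m x - m (l * x)|
        ≤ l * (x * (Pi0 {y : ℝ | x ≤ |y|}).toReal) := by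
      have : m x - m (l * x) = - ∫ y in {y : ℝ | x ≤ |y| ∧ |y| < l * x}, y ∂Pi0 := by
        rw [hdiff]; ring
      rw [this, abs_neg]
      calc |∫ y in {y : ℝ | x ≤ |y| ∧ |y| < l * x}, y ∂Pi0|
          ≤ l * x * (Pi0 {y : ℝ | x ≤ |y| ∧ |y| < l * x}).toReal := hnorm
        _ ≤ l * (x * (Pi0 {y : ℝ | x ≤ |y|}).toReal) := by
            rw [mul_assoc]
            exact mul_le_mul_of_nonneg_left
              (mul_le_mul_of_nonneg_left hmono hx0.le) hl0.le
    have hest2 : |m x - m (l * x)| ≤ (ε / 2) * m x := by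
      calc |m x - m (l * x)| ≤ l * (x * (Pi0 {y : ℝ | x ≤ |y|}).toReal) := hest
        _ ≤ l * ((ε / (2 * l)) * m x) := mul_le_mul_of_nonneg_left hbound hl0.le
        _ = (ε / 2) * m x := by field_simp
    rw [Real.dist_eq]
    have heq : m (l * x) / m x - 1 = (m (l * x) - m x) / m x := by
      field_simp
    rw [heq, abs_div, abs_of_pos hmx, div_lt_iff₀ hmx, abs_sub_comm]
    calc |m x - m (l * x)| ≤ (ε / 2) * m x := hest2
      _ < ε * m x := by nlinarith
  intro l hl
  rcases le_or_gt 1 l with h1 | h1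
  · exact H l h1
  · -- l < 1 : use the reciprocal
    have hinvl : 1 ≤ 1 / l := by
      rw [le_div_iff₀ hl]
      nlinarith
    have hmap : Tendsto (fun x : ℝ => l * x) (𝓝[>] (0:ℝ)) (𝓝[>] (0:ℝ)) := by
      apply tendsto_nhdsWithin_of_tendsto_nhds_of_eventually_within
      · have : Tendsto (fun x : ℝ => l * x) (𝓝 0) (𝓝 (l * 0)) :=
          (continuous_const.mul continuous_id).tendsto 0
        simpa using this.mono_left nhdsWithin_le_nhds
      · filter_upwards [self_mem_nhdsWithin] with x hx
        exact mul_pos hl hx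
    have hcomp := (H (1 / l) hinvl).comp hmap
    have heq : (fun x : ℝ => m (1 / l * (l * x)) / m (l * x))
        = fun x : ℝ => m x / m (l * x) := by
      funext x
      congr 2
      field_simp
    rw [Function.comp_def] at hcomp
    rw [heq] at hcomp
    have := hcomp.inv₀ one_ne_zero
    simp only [inv_div, inv_one] at this
    exact this
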